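/- Let U be a weakly Ramsey non-selective ultrafilter with witnessing interval partition P = ⟨[p_n, p_{n+1})⟩. In the ultrapower ℕ^ℕ/U, let A, B, S, E, F be the cuts generated (downward for F; upward for the others) by the families {a^A_P : A ∈ U}, {b^A_P : A ∈ U}, {functions 1-1 mod U}, {functions increasing mod U}, {f : U is f-QS}, where for p_n ≤ x < p_{n+1}, a^A_P(x) = |A ∩ [p_n, x)| and b^A_P(x) = |A ∩ [x, p_{n+1})|. Then S = min{A, B}, A = E, and B = F. -/

import Mathlib

def Nonprincipal (U : Ultrafilter ℕ) : Prop := ∀ A : Set ℕ, A.Finite → A ∉ U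

def UnboundedModU (U : Ultrafilter ℕ) (f : ℕ → ℕ) : Prop := ∀ n : ℕ, {x | n < f x} ∈ U

def NondecrModU (U : Ultrafilter ℕ) (g : ℕ → ℕ) : Prop :=
  ∃ A ∈ U, ∀ x ∈ A, ∀ y ∈ A, x ≤ y → g x ≤ g y

def QSfor (U : Ultrafilter ℕ) (f : ℕ → ℕ) : Prop :=
  ∀ g : ℕ → ℕ, {x | g x ≤ f x} ∈ U → NondecrModU U g

def Selective (U : Ultrafilter ℕ) : Prop := ∀ g : ℕ → ℕ, NondecrModU U g

def Rapid (U : Ultrafilter ℕ) : Prop :=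
  ∀ g : ℕ → ℕ, StrictMono g → ∃ A ∈ U, ∀ n, 1 ≤ n → (A ∩ Set.Iic (g n)).ncard < n

def WeaklyRamsey (U : Ultrafilter ℕ) : Prop :=
  ∀ (k : ℕ) (c : ℕ → ℕ → Fin k), ∃ A ∈ U, ∃ i j : Fin k,
    ∀ x ∈ A, ∀ y ∈ A, x < y → c x y = i ∨ c x y = j

def leU (U : Ultrafilter ℕ) (f g : ℕ → ℕ) : Prop := {x | f x ≤ g x} ∈ U

def QPoint (U : Ultrafilter ℕ) : Prop :=
  ∀ p : ℕ → ℕ, p 0 = 0 → StrictMono p →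
    ∃ A ∈ U, ∀ n, (A ∩ Set.Ico (p n) (p (n+1))).Subsingleton

open Filter Set

section St15
variable {p : ℕ → ℕ}

def nidx (p : ℕ → ℕ) (x : ℕ) : ℕ := Nat.findGreatest (fun n => p n ≤ x) x

lemma nidx_le (hp0 : p 0 = 0) (x : ℕ) : p (nidx p x) ≤ x :=
  Nat.findGreatest_spec (P := fun n => p n ≤ x) (Nat.zero_le x) (by simp [hp0])

lemma nidx_lt (hp0 : p 0 = 0) (hpm : StrictMono p) (x : ℕ) : x < p (nidx p x + 1) := by
  by_contra hcon
  push_neg at hcon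
  have h1 : nidx p x + 1 ≤ x := le_trans hpm.le_apply hcon
  have h2 := Nat.le_findGreatest (P := fun n => p n ≤ x) h1 hcon
  have : nidx p x + 1 ≤ nidx p x := h2
  omega

lemma nidx_eq (hp0 : p 0 = 0) (hpm : StrictMono p) {n x : ℕ} (h1 : p n ≤ x) (h2 : x < p (n+1)) :
    nidx p x = n := by
  have ha := nidx_le hp0 x
  have hb := nidx_lt hp0 hpm x
  rcases lt_trichotomy (nidx p x) n with hc | hc | hc
  · have := hpm.monotone (show nidx p x + 1 ≤ n by omega); omega
  · exact hc
  · have := hpm.monotone (show n + 1 ≤ nidx p x by omega); omega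

noncomputable def af (p : ℕ → ℕ) (A : Set ℕ) (x : ℕ) : ℕ := (A ∩ Set.Ico (p (nidx p x)) x).ncard

noncomputable def bf (p : ℕ → ℕ) (A : Set ℕ) (x : ℕ) : ℕ := (A ∩ Set.Ico x (p (nidx p x + 1))).ncard

lemma ncard_Iio (n : ℕ) : (Set.Iio n).ncard = n := by
  rw [← Finset.coe_range, Set.ncard_coe_finset, Finset.card_range]

lemma interfin {A : Set ℕ} {c d : ℕ} : (A ∩ Set.Ico c d).Finite :=
  Set.Finite.subset (Set.finite_Ico c d) Set.inter_subset_right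

lemma af_lt (hp0 : p 0 = 0) (hpm : StrictMono p) {A : Set ℕ} {x y : ℕ}
    (hx : x ∈ A) (hxy : x < y) (hn : nidx p x = nidx p y) : af p A x < af p A y := by
  simp only [af]
  rw [hn]
  apply Set.ncard_lt_ncard ?_ interfin
  have hsub : A ∩ Set.Ico (p (nidx p y)) x ⊆ A ∩ Set.Ico (p (nidx p y)) y :=
    Set.inter_subset_inter_right _ (Set.Ico_subset_Ico le_rfl hxy.le)
  refine (Set.ssubset_iff_of_subset hsub).mpr ?_
  refine ⟨x, ⟨hx, by rw [← hn]; exact nidx_le hp0 x, hxy⟩, fun hc => ?_⟩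
  exact lt_irrefl x hc.2.2

lemma bf_lt (hp0 : p 0 = 0) (hpm : StrictMono p) {A : Set ℕ} {x y : ℕ}
    (hx : x ∈ A) (hxy : x < y) (hn : nidx p x = nidx p y) : bf p A y < bf p A x := by
  simp only [bf]
  rw [← hn]
  apply Set.ncard_lt_ncard ?_ interfin
  have hsub : A ∩ Set.Ico y (p (nidx p x + 1)) ⊆ A ∩ Set.Ico x (p (nidx p x + 1)) :=
    Set.inter_subset_inter_right _ (Set.Ico_subset_Ico hxy.le le_rfl)
  refine (Set.ssubset_iff_of_subset hsub).mpr ?_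
  exact ⟨x, ⟨hx, le_rfl, nidx_lt hp0 hpm x⟩, fun hc => lt_irrefl x (lt_of_lt_of_le hxy hc.2.1)⟩

lemma af_mono {A B : Set ℕ} (hBA : B ⊆ A) (x : ℕ) : af p B x ≤ af p A x :=
  Set.ncard_le_ncard (Set.inter_subset_inter hBA (le_refl _)) interfin

lemma bf_mono {A B : Set ℕ} (hBA : B ⊆ A) (x : ℕ) : bf p B x ≤ bf p A x :=
  Set.ncard_le_ncard (Set.inter_subset_inter hBA (le_refl _)) interfin

lemma af_le_of_inc (hp0 : p 0 = 0) {B : Set ℕ} {g : ℕ → ℕ} {x : ℕ}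
    (hg : ∀ u ∈ B, ∀ v ∈ B, u < v → g u < g v) (hx : x ∈ B) : af p B x ≤ g x := by
  have h1 : (B ∩ Set.Ico (p (nidx p x)) x).ncard ≤ (Set.Iio (g x)).ncard := by
    apply Set.ncard_le_ncard_of_injOn g
    · rintro z ⟨hzB, _, hzx⟩
      exact Set.mem_Iio.mpr (hg z hzB x hx hzx)
    · rintro u ⟨huB, _, _⟩ v ⟨hvB, _, _⟩ huv
      rcases lt_trichotomy u v with hc|hc|hc
      · exact absurd huv (ne_of_lt (hg u huB v hvB hc))
      · exact hc
      · exact absurd huv.symm (ne_of_lt (hg v hvB u huB hc))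
  rw [ncard_Iio] at h1
  exact h1

lemma bf_le_of_dec (hp0 : p 0 = 0) (hpm : StrictMono p) {B : Set ℕ} {g : ℕ → ℕ} {x : ℕ}
    (hg : ∀ u ∈ B, ∀ v ∈ B, u < v → nidx p u = nidx p v → g v < g u) (hx : x ∈ B) :
    bf p B x ≤ g x + 1 := by
  have key : ∀ z ∈ B ∩ Set.Ico x (p (nidx p x + 1)), nidx p z = nidx p x := by
    rintro z ⟨hzB, hxz, hzlt⟩
    exact nidx_eq hp0 hpm (le_trans (nidx_le hp0 x) hxz) hzlt
  have h1 : (B ∩ Set.Ico x (p (nidx p x + 1))).ncard ≤ (Set.Iio (g x + 1)).ncard := by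
    apply Set.ncard_le_ncard_of_injOn g
    · intro z hz
      rcases eq_or_lt_of_le hz.2.1 with hc | hc
      · exact Set.mem_Iio.mpr (by rw [← hc]; omega)
      · exact Set.mem_Iio.mpr (lt_trans (hg x hx z hz.1 hc (key z hz).symm) (by omega))
    · intro u hu v hv huv
      rcases lt_trichotomy u v with hc|hc|hc
      · exact absurd huv (ne_of_gt (hg u hu.1 v hv.1 hc ((key u hu).trans (key v hv).symm)))
      · exact hc
      · exact absurd huv (ne_of_lt (hg v hv.1 u hu.1 hc ((key v hv).trans (key u hu).symm)))
  rw [ncard_Iio] at h1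
  exact h1


variable {U : Ultrafilter ℕ}

lemma sel_not (hp0 : p 0 = 0) (hpm : StrictMono p)
    (hsel : ¬ ∃ A ∈ U, ∀ n, (A ∩ Set.Ico (p n) (p (n+1))).Subsingleton)
    {S : Set ℕ} (hS : ∀ x ∈ S, ∀ y ∈ S, nidx p x = nidx p y → x = y) : S ∉ U := by
  intro hU
  apply hsel
  refine ⟨S, hU, fun n x hx y hy => ?_⟩
  exact hS x hx.1 y hy.1 (by rw [nidx_eq hp0 hpm hx.2.1 hx.2.2, nidx_eq hp0 hpm hy.2.1 hy.2.2])

lemma samepair (hp0 : p 0 = 0) (hpm : StrictMono p)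
    (hsel : ¬ ∃ A ∈ U, ∀ n, (A ∩ Set.Ico (p n) (p (n+1))).Subsingleton)
    {K : Set ℕ} (hK : K ∈ U) : ∃ x ∈ K, ∃ y ∈ K, x < y ∧ nidx p x = nidx p y := by
  by_contra hcon
  push_neg at hcon
  refine sel_not hp0 hpm hsel (fun x hx y hy hn => ?_) hK
  rcases lt_trichotomy x y with hc|hc|hc
  · exact absurd hn (hcon x hx y hy hc)
  · exact hc
  · exact absurd hn.symm (hcon y hy x hx hc)

lemma diffpair (hp0 : p 0 = 0) (hpm : StrictMono p)
    (hNP : ∀ A : Set ℕ, A.Finite → A ∉ U)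
    {K : Set ℕ} (hK : K ∈ U) : ∃ x ∈ K, ∃ y ∈ K, x < y ∧ nidx p x ≠ nidx p y := by
  have hinf : K.Infinite := by
    by_contra hfin
    rw [Set.not_infinite] at hfin
    exact hNP K hfin hK
  obtain ⟨x, hx⟩ := hinf.nonempty
  obtain ⟨y, hy⟩ := (hinf.diff (Set.finite_Iic (p (nidx p x + 1)))).nonempty
  have hgt : p (nidx p x + 1) < y := by
    by_contra hc
    exact hy.2 (by simpa using not_lt.mp hc)
  refine ⟨x, hx, y, hy.1, lt_trans (nidx_lt hp0 hpm x) hgt, fun he => ?_⟩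
  have h2 := nidx_lt hp0 hpm y
  rw [← he] at h2
  omega

lemma Ioi_mem (hNP : ∀ A : Set ℕ, A.Finite → A ∉ U) (x₀ : ℕ) : Set.Ioi x₀ ∈ U := by
  rw [← Set.compl_Iic]
  exact (Ultrafilter.compl_mem_iff_notMem).mpr (hNP _ (Set.finite_Iic x₀))

lemma neidx_mem (hp0 : p 0 = 0) (hpm : StrictMono p)
    (hNP : ∀ A : Set ℕ, A.Finite → A ∉ U) (x₀ : ℕ) : {x | nidx p x ≠ nidx p x₀} ∈ U := by
  have hfin : {x | nidx p x = nidx p x₀}.Finite := by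
    apply (Set.finite_Ico (p (nidx p x₀)) (p (nidx p x₀ + 1))).subset
    intro x hx
    exact ⟨by rw [← hx]; exact nidx_le hp0 x, by rw [← hx]; exact nidx_lt hp0 hpm x⟩
  exact (Ultrafilter.compl_mem_iff_notMem).mpr (hNP _ hfin)

def Mset (p : ℕ → ℕ) (B : Set ℕ) : Set ℕ := {x | x ∈ B ∧ ∀ y ∈ B, nidx p y = nidx p x → y ≤ x}

lemma drop_mem (hp0 : p 0 = 0) (hpm : StrictMono p)
    (hsel : ¬ ∃ A ∈ U, ∀ n, (A ∩ Set.Ico (p n) (p (n+1))).Subsingleton)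
    {B : Set ℕ} (hB : B ∈ U) : B \ Mset p B ∈ U := by
  have hM : Mset p B ∉ U :=
    sel_not hp0 hpm hsel (fun x hx y hy hn => le_antisymm (hy.2 x hx.1 hn) (hx.2 y hy.1 hn.symm))
  rw [Set.diff_eq]
  exact inter_mem hB ((Ultrafilter.compl_mem_iff_notMem).mpr hM)

lemma exists_max (S : Set ℕ) (hfin : S.Finite) (hne : S.Nonempty) : ∃ m ∈ S, ∀ y ∈ S, y ≤ m := by
  obtain ⟨m, hm, hmax⟩ := Set.Finite.exists_maximalFor id S hfin hne
  exact ⟨m, hm, fun y hy => by rcases le_total y m with hc|hc; exacts [hc, hmax hy hc]⟩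

lemma bf_drop (hp0 : p 0 = 0) (hpm : StrictMono p) {B : Set ℕ} {x : ℕ}
    (hx : x ∈ B \ Mset p B) : bf p (B \ Mset p B) x < bf p B x := by
  obtain ⟨m, hm, hmax⟩ := exists_max (B ∩ Set.Ico (p (nidx p x)) (p (nidx p x + 1))) interfin
    ⟨x, hx.1, nidx_le hp0 x, nidx_lt hp0 hpm x⟩
  have hnm : nidx p m = nidx p x := nidx_eq hp0 hpm hm.2.1 hm.2.2
  have hmM : m ∈ Mset p B := by
    refine ⟨hm.1, fun y hy hny => ?_⟩
    have hyx : nidx p y = nidx p x := hny.trans hnm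
    refine hmax y ⟨hy, ?_, ?_⟩
    · rw [← hyx]; exact nidx_le hp0 y
    · rw [← hyx]; exact nidx_lt hp0 hpm y
  simp only [bf]
  apply Set.ncard_lt_ncard ?_ interfin
  refine (Set.ssubset_iff_of_subset
    (Set.inter_subset_inter Set.diff_subset (le_refl _))).mpr ?_
  refine ⟨m, ⟨hm.1, hmax x ⟨hx.1, nidx_le hp0 x, nidx_lt hp0 hpm x⟩, hm.2.2⟩, fun hc => ?_⟩
  exact hc.1.2 hmM

lemma LTa (hp0 : p 0 = 0) (hpm : StrictMono p)
    (hsel : ¬ ∃ A ∈ U, ∀ n, (A ∩ Set.Ico (p n) (p (n+1))).Subsingleton)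
    {B : Set ℕ} (k : ℕ) : {x | x ∈ B ∧ af p B x < k} ∉ U := by
  induction k with
  | zero =>
    intro hc
    obtain ⟨x, hx⟩ := U.nonempty_of_mem hc
    exact Nat.not_lt_zero _ hx.2
  | succ k ih =>
    intro hc
    have hsub : {x | x ∈ B ∧ af p B x < k+1} ⊆
        {x | x ∈ B ∧ af p B x < k} ∪ {x | x ∈ B ∧ af p B x = k} := by
      intro x hx
      by_cases hck : af p B x < k
      · exact Or.inl ⟨hx.1, hck⟩
      · exact Or.inr ⟨hx.1, by have := hx.2; omega⟩
    have hun := mem_of_superset hc hsub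
    rcases (Ultrafilter.union_mem_iff).mp hun with h1 | h2
    · exact ih h1
    · refine sel_not hp0 hpm hsel (fun u hu v hv hn => ?_) h2
      rcases lt_trichotomy u v with hcc|hcc|hcc
      · have := af_lt hp0 hpm hu.1 hcc hn; have := hu.2; have := hv.2; omega
      · exact hcc
      · have := af_lt hp0 hpm hv.1 hcc hn.symm; have := hu.2; have := hv.2; omega

lemma LTb (hp0 : p 0 = 0) (hpm : StrictMono p)
    (hsel : ¬ ∃ A ∈ U, ∀ n, (A ∩ Set.Ico (p n) (p (n+1))).Subsingleton)
    {B : Set ℕ} (k : ℕ) : {x | x ∈ B ∧ bf p B x < k} ∉ U := by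
  induction k with
  | zero =>
    intro hc
    obtain ⟨x, hx⟩ := U.nonempty_of_mem hc
    exact Nat.not_lt_zero _ hx.2
  | succ k ih =>
    intro hc
    have hsub : {x | x ∈ B ∧ bf p B x < k+1} ⊆
        {x | x ∈ B ∧ bf p B x < k} ∪ {x | x ∈ B ∧ bf p B x = k} := by
      intro x hx
      by_cases hck : bf p B x < k
      · exact Or.inl ⟨hx.1, hck⟩
      · exact Or.inr ⟨hx.1, by have := hx.2; omega⟩
    have hun := mem_of_superset hc hsub
    rcases (Ultrafilter.union_mem_iff).mp hun with h1 | h2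
    · exact ih h1
    · refine sel_not hp0 hpm hsel (fun u hu v hv hn => ?_) h2
      rcases lt_trichotomy u v with hcc|hcc|hcc
      · have := bf_lt hp0 hpm hu.1 hcc hn; have := hu.2; have := hv.2; omega
      · exact hcc
      · have := bf_lt hp0 hpm hv.1 hcc hn.symm; have := hu.2; have := hv.2; omega

lemma exists_eq_of_bounded (g : ℕ → ℕ) :
    ∀ (N : ℕ) (S : Set ℕ), S ∈ U → (∀ x ∈ S, g x ≤ N) → ∃ v, {x | x ∈ S ∧ g x = v} ∈ U := by
  intro N
  induction N with
  | zero =>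
    intro S hS hb
    exact ⟨0, mem_of_superset hS (fun x hx => ⟨hx, Nat.le_zero.mp (hb x hx)⟩)⟩
  | succ N ih =>
    intro S hS hb
    by_cases hT : {x | x ∈ S ∧ g x = N+1} ∈ U
    · exact ⟨N+1, hT⟩
    · have hS' : S ∩ {x | x ∈ S ∧ g x = N+1}ᶜ ∈ U :=
        inter_mem hS ((Ultrafilter.compl_mem_iff_notMem).mpr hT)
      obtain ⟨v, hv⟩ := ih _ hS' (fun x hx => by
        have h1 := hb x hx.1
        have h3 : g x ≠ N+1 := fun he => hx.2 ⟨hx.1, he⟩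
        omega)
      exact ⟨v, mem_of_superset hv (fun x hx => ⟨hx.1.1, hx.2⟩)⟩

lemma dichot (hWR : WeaklyRamsey U) (Q P : ℕ → ℕ → Prop)
    (hQ' : ∀ K : Set ℕ, K ∈ U → ∃ x ∈ K, ∃ y ∈ K, x < y ∧ ¬ Q x y)
    (C : Set ℕ) (hC : C ∈ U) :
    ∃ K : Set ℕ, K ∈ U ∧ K ⊆ C ∧
      ((∀ x ∈ K, ∀ y ∈ K, x < y → Q x y → P x y) ∨
       (∀ x ∈ K, ∀ y ∈ K, x < y → Q x y → ¬ P x y)) := by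
  classical
  set c : ℕ → ℕ → Fin 3 := fun x y => if Q x y then (if P x y then 1 else 2) else 0 with hc
  obtain ⟨H, hH, i, j, hij⟩ := hWR 3 c
  refine ⟨H ∩ C, inter_mem hH hC, Set.inter_subset_right, ?_⟩
  by_cases hex : ∃ x ∈ H ∩ C, ∃ y ∈ H ∩ C, x < y ∧ Q x y ∧ ¬ P x y
  · right
    rintro x hx y hy hxy hQxy hP
    obtain ⟨u, hu, v, hv, huv, hQuv, hPuv⟩ := hex
    obtain ⟨s, hs, t, ht, hst, hQst⟩ := hQ' (H ∩ C) (inter_mem hH hC)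
    have h1 : c x y = i ∨ c x y = j := hij x hx.1 y hy.1 hxy
    have h2 : c u v = i ∨ c u v = j := hij u hu.1 v hv.1 huv
    have h0 : c s t = i ∨ c s t = j := hij s hs.1 t ht.1 hst
    have e1 : c x y = 1 := by simp [hc, hQxy, hP]
    have e2 : c u v = 2 := by simp [hc, hQuv, hPuv]
    have e0 : c s t = 0 := by simp [hc, hQst]
    rw [e1] at h1; rw [e2] at h2; rw [e0] at h0
    rcases h0 with rfl | rfl
    · rcases h1 with h1 | rfl
      · exact absurd h1 (by decide)
      · rcases h2 with h2 | h2 <;> exact absurd h2 (by decide)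
    · rcases h1 with rfl | h1
      · rcases h2 with h2 | h2 <;> exact absurd h2 (by decide)
      · exact absurd h1 (by decide)
  · left
    push_neg at hex
    exact fun x hx y hy hxy hQxy => hex x hx y hy hxy hQxy

end St15

theorem stmt15 (U : Ultrafilter ℕ) (hNP : Nonprincipal U) (hWR : WeaklyRamsey U)
    (p : ℕ → ℕ) (hp0 : p 0 = 0) (hpm : StrictMono p)
    (hsel : ¬ ∃ A ∈ U, ∀ n, (A ∩ Set.Ico (p n) (p (n+1))).Subsingleton)
    (a b : Set ℕ → ℕ → ℕ)
    (hab : ∀ (A : Set ℕ) (n x : ℕ), p n ≤ x → x < p (n+1) →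
      a A x = (A ∩ Set.Ico (p n) x).ncard ∧ b A x = (A ∩ Set.Ico x (p (n+1))).ncard) :
    (∀ h : ℕ → ℕ, (∃ g : ℕ → ℕ, (∃ A ∈ U, Set.InjOn g A) ∧ leU U g h) ↔
       ((∃ A ∈ U, leU U (a A) h) ∨ (∃ A ∈ U, leU U (b A) h))) ∧
    (∀ h : ℕ → ℕ, (∃ A ∈ U, leU U (a A) h) ↔
       (∃ g : ℕ → ℕ, (∃ A ∈ U, ∀ x ∈ A, ∀ y ∈ A, x < y → g x < g y) ∧ leU U g h)) ∧
    (∀ h : ℕ → ℕ, (∃ f : ℕ → ℕ, QSfor U f ∧ leU U h f) ↔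
       ¬ ∃ A ∈ U, leU U (b A) h) := by
  classical
  have hNP' : ∀ A : Set ℕ, A.Finite → A ∉ U := hNP
  have ha : ∀ (A : Set ℕ) (x : ℕ), a A x = af p A x := fun A x =>
    (hab A (nidx p x) x (nidx_le hp0 x) (nidx_lt hp0 hpm x)).1
  have hbb : ∀ (A : Set ℕ) (x : ℕ), b A x = bf p A x := fun A x =>
    (hab A (nidx p x) x (nidx_le hp0 x) (nidx_lt hp0 hpm x)).2
  have hsp : ∀ K : Set ℕ, K ∈ U → ∃ x ∈ K, ∃ y ∈ K, x < y ∧ ¬ (nidx p x ≠ nidx p y) := by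
    intro K hK
    obtain ⟨x, hx, y, hy, hxy, hn⟩ := samepair hp0 hpm hsel hK
    exact ⟨x, hx, y, hy, hxy, fun hc => hc hn⟩
  -- every A ∈ U has a U-subset on which af p A is strictly increasing
  have inc_a : ∀ A : Set ℕ, A ∈ U → ∃ K, K ∈ U ∧ K ⊆ A ∧
      ∀ x ∈ K, ∀ y ∈ K, x < y → af p A x < af p A y := by
    intro A hAU
    obtain ⟨K, hKU, hKsub, hKd⟩ := dichot hWR (fun x y => nidx p x ≠ nidx p y)
      (fun x y => af p A x < af p A y) hsp A hAU
    rcases hKd with hP | hP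
    · refine ⟨K, hKU, hKsub, fun x hx y hy hxy => ?_⟩
      by_cases hn : nidx p x = nidx p y
      · exact af_lt hp0 hpm (hKsub hx) hxy hn
      · exact hP x hx y hy hxy hn
    · exfalso
      obtain ⟨x₀, hx₀⟩ := U.nonempty_of_mem hKU
      have hH₂U : K ∩ Set.Ioi x₀ ∩ {x | nidx p x ≠ nidx p x₀} ∈ U :=
        inter_mem (inter_mem hKU (Ioi_mem hNP' x₀)) (neidx_mem hp0 hpm hNP' x₀)
      refine LTa hp0 hpm hsel (B := K ∩ Set.Ioi x₀ ∩ {x | nidx p x ≠ nidx p x₀})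
        (af p A x₀ + 1) (Filter.mem_of_superset hH₂U ?_)
      rintro x ⟨⟨hxK, hxgt⟩, hxne⟩
      have hb1 : ¬ (af p A x₀ < af p A x) :=
        hP x₀ hx₀ x hxK hxgt (fun he => hxne he.symm)
      have hb2 : af p (K ∩ Set.Ioi x₀ ∩ {x | nidx p x ≠ nidx p x₀}) x ≤ af p A x :=
        af_mono (fun z hz => hKsub hz.1.1) x
      exact ⟨⟨⟨hxK, hxgt⟩, hxne⟩, by omega⟩
  -- every A ∈ U has a U-subset on which bf p A is injective
  have inj_b : ∀ A : Set ℕ, A ∈ U → ∃ K, K ∈ U ∧ K ⊆ A ∧ Set.InjOn (bf p A) K := by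
    intro A hAU
    obtain ⟨K, hKU, hKsub, hKd⟩ := dichot hWR (fun x y => nidx p x ≠ nidx p y)
      (fun x y => bf p A x ≠ bf p A y) hsp A hAU
    rcases hKd with hP | hP
    · refine ⟨K, hKU, hKsub, fun u hu v hv huv => ?_⟩
      by_contra hne
      rcases lt_trichotomy u v with hc|hc|hc
      · by_cases hn : nidx p u = nidx p v
        · have := bf_lt hp0 hpm (hKsub hu) hc hn; omega
        · exact hP u hu v hv hc hn huv
      · exact hne hc
      · by_cases hn : nidx p v = nidx p u
        · have := bf_lt hp0 hpm (hKsub hv) hc hn; omega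
        · exact absurd huv.symm (hP v hv u hu hc hn)
    · exfalso
      obtain ⟨x₀, hx₀⟩ := U.nonempty_of_mem hKU
      have hH₂U : K ∩ Set.Ioi x₀ ∩ {x | nidx p x ≠ nidx p x₀} ∈ U :=
        inter_mem (inter_mem hKU (Ioi_mem hNP' x₀)) (neidx_mem hp0 hpm hNP' x₀)
      refine LTb hp0 hpm hsel (B := K ∩ Set.Ioi x₀ ∩ {x | nidx p x ≠ nidx p x₀})
        (bf p A x₀ + 1) (Filter.mem_of_superset hH₂U ?_)
      rintro x ⟨⟨hxK, hxgt⟩, hxne⟩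
      have hb1 : bf p A x = bf p A x₀ :=
        (not_not.mp (hP x₀ hx₀ x hxK hxgt (fun he => hxne he.symm))).symm
      have hb2 : bf p (K ∩ Set.Ioi x₀ ∩ {x | nidx p x ≠ nidx p x₀}) x ≤ bf p A x :=
        bf_mono (fun z hz => hKsub hz.1.1) x
      exact ⟨⟨⟨hxK, hxgt⟩, hxne⟩, by omega⟩
  -- double dichotomy for an arbitrary g
  have quad : ∀ (g : ℕ → ℕ) (C : Set ℕ), C ∈ U →
      ∃ K, K ∈ U ∧ K ⊆ C ∧
        ((∀ x ∈ K, ∀ y ∈ K, x < y → nidx p x ≠ nidx p y → g x ≤ g y) ∨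
         (∀ x ∈ K, ∀ y ∈ K, x < y → nidx p x ≠ nidx p y → ¬ g x ≤ g y)) ∧
        ((∀ x ∈ K, ∀ y ∈ K, x < y → nidx p x = nidx p y → g x ≤ g y) ∨
         (∀ x ∈ K, ∀ y ∈ K, x < y → nidx p x = nidx p y → ¬ g x ≤ g y)) := by
    intro g C hC
    obtain ⟨K₁, hK₁U, hK₁sub, hd1⟩ := dichot hWR (fun x y => nidx p x ≠ nidx p y)
      (fun x y => g x ≤ g y) hsp C hC
    obtain ⟨K₂, hK₂U, hK₂sub, hd2⟩ := dichot hWR (fun x y => nidx p x = nidx p y)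
      (fun x y => g x ≤ g y) (fun K hK => diffpair hp0 hpm hNP' hK) K₁ hK₁U
    refine ⟨K₂, hK₂U, fun z hz => hK₁sub (hK₂sub hz), ?_, hd2⟩
    rcases hd1 with hq|hq
    · exact Or.inl (fun x hx y hy hxy hn => hq x (hK₂sub hx) y (hK₂sub hy) hxy hn)
    · exact Or.inr (fun x hx y hy hxy hn => hq x (hK₂sub hx) y (hK₂sub hy) hxy hn)
  refine ⟨?_, ?_, ?_⟩
  · -- Statement 1 : S = min(A,B)
    intro h
    constructor
    · rintro ⟨g, ⟨A, hAU, hginj⟩, hgh⟩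
      have hgh' : {x | g x ≤ h x} ∈ U := hgh
      have hCU : A ∩ {x | g x ≤ h x} ∈ U := inter_mem hAU hgh'
      obtain ⟨K, hKU, hKsub, hdiff, hsame⟩ := quad g (A ∩ {x | g x ≤ h x}) hCU
      have hKA : K ⊆ A := fun z hz => (hKsub hz).1
      rcases hdiff with hD | hD
      · rcases hsame with hS | hS
        · -- g strictly increasing on K : a-side
          left
          have hstrict : ∀ u ∈ K, ∀ v ∈ K, u < v → g u < g v := by
            intro u hu v hv huv
            have hle : g u ≤ g v := by
              by_cases hn : nidx p u = nidx p v
              · exact hS u hu v hv huv hn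
              · exact hD u hu v hv huv hn
            have hne : g u ≠ g v := fun he => (ne_of_lt huv) (hginj (hKA hu) (hKA hv) he)
            omega
          refine ⟨K, hKU, ?_⟩
          show {x | a K x ≤ h x} ∈ U
          refine Filter.mem_of_superset hKU (fun x hx => ?_)
          show a K x ≤ h x
          rw [ha]
          exact le_trans (af_le_of_inc hp0 hstrict hx) (hKsub hx).2
        · -- g strictly decreasing within intervals on K : b-side
          right
          have hdec : ∀ u ∈ K, ∀ v ∈ K, u < v → nidx p u = nidx p v → g v < g u := by
            intro u hu v hv huv hn
            have h1 := hS u hu v hv huv hn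
            have hne : g u ≠ g v := fun he => (ne_of_lt huv) (hginj (hKA hu) (hKA hv) he)
            omega
          refine ⟨K \ Mset p K, drop_mem hp0 hpm hsel hKU, ?_⟩
          show {x | b (K \ Mset p K) x ≤ h x} ∈ U
          refine Filter.mem_of_superset (drop_mem hp0 hpm hsel hKU) (fun x hx => ?_)
          show b (K \ Mset p K) x ≤ h x
          rw [hbb]
          have h1 : bf p K x ≤ g x + 1 := bf_le_of_dec hp0 hpm hdec hx.1
          have h2 : bf p (K \ Mset p K) x < bf p K x := bf_drop hp0 hpm hx
          have h3 : g x ≤ h x := (hKsub hx.1).2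
          omega
      · -- g decreasing across intervals : contradiction with injectivity
        exfalso
        obtain ⟨x₀, hx₀⟩ := U.nonempty_of_mem hKU
        have hH₂U : K ∩ Set.Ioi x₀ ∩ {x | nidx p x ≠ nidx p x₀} ∈ U :=
          inter_mem (inter_mem hKU (Ioi_mem hNP' x₀)) (neidx_mem hp0 hpm hNP' x₀)
        obtain ⟨v, hv⟩ := exists_eq_of_bounded g (g x₀)
          (K ∩ Set.Ioi x₀ ∩ {x | nidx p x ≠ nidx p x₀}) hH₂U (by
            rintro x ⟨⟨hxK, hxgt⟩, hxne⟩
            have := hD x₀ hx₀ x hxK hxgt (fun he => hxne he.symm)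
            omega)
        obtain ⟨u, hu, w, hw, huw, _⟩ := samepair hp0 hpm hsel hv
        exact absurd (hginj (hKA hu.1.1.1) (hKA hw.1.1.1) (hu.2.trans hw.2.symm)) (ne_of_lt huw)
    · rintro (⟨A, hAU, hAh⟩ | ⟨A, hAU, hAh⟩)
      · obtain ⟨K, hKU, hKsub, hKinc⟩ := inc_a A hAU
        refine ⟨a A, ⟨K, hKU, ?_⟩, hAh⟩
        intro u hu v hv huv
        by_contra hne
        rcases lt_trichotomy u v with hc|hc|hc
        · have := hKinc u hu v hv hc; rw [ha, ha] at huv; omega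
        · exact hne hc
        · have := hKinc v hv u hu hc; rw [ha, ha] at huv; omega
      · obtain ⟨K, hKU, hKsub, hKinj⟩ := inj_b A hAU
        refine ⟨b A, ⟨K, hKU, ?_⟩, hAh⟩
        intro u hu v hv huv
        refine hKinj hu hv ?_
        rw [← hbb, ← hbb]
        exact huv
  · -- Statement 2 : A = E
    intro h
    constructor
    · rintro ⟨A, hAU, hAh⟩
      obtain ⟨K, hKU, hKsub, hKinc⟩ := inc_a A hAU
      refine ⟨a A, ⟨K, hKU, fun x hx y hy hxy => ?_⟩, hAh⟩
      rw [ha, ha]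
      exact hKinc x hx y hy hxy
    · rintro ⟨g, ⟨B, hBU, hBg⟩, hgh⟩
      refine ⟨B, hBU, ?_⟩
      show {x | a B x ≤ h x} ∈ U
      have hgh' : {x | g x ≤ h x} ∈ U := hgh
      refine Filter.mem_of_superset (inter_mem hBU hgh') ?_
      rintro x ⟨hxB, hxg⟩
      show a B x ≤ h x
      rw [ha]
      exact le_trans (af_le_of_inc hp0 hBg hxB) hxg
  · -- Statement 3 : B = F
    intro h
    constructor
    · rintro ⟨f, hfQS, hhf⟩ ⟨A, hAU, hbh⟩
      have hbh' : {x | b A x ≤ h x} ∈ U := hbh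
      have hhf' : {x | h x ≤ f x} ∈ U := hhf
      have hbf : {x | b A x ≤ f x} ∈ U :=
        Filter.mem_of_superset (inter_mem hbh' hhf') (fun x hx => show b A x ≤ f x from le_trans hx.1 hx.2)
      obtain ⟨D, hDU, hDmono⟩ := hfQS (b A) hbf
      obtain ⟨u, hu, v, hv, huv, hn⟩ := samepair hp0 hpm hsel (inter_mem hDU hAU)
      have h1 : b A u ≤ b A v := hDmono u hu.1 v hv.1 huv.le
      have h2 : bf p A v < bf p A u := bf_lt hp0 hpm hu.2 huv hn
      rw [hbb, hbb] at h1
      omega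
    · intro hnb
      refine ⟨h, ?_, ?_⟩
      · intro g hg
        obtain ⟨K, hKU, hKsub, hdiff, hsame⟩ := quad g {x | g x ≤ h x} hg
        rcases hdiff with hD | hD
        · rcases hsame with hS | hS
          · exact ⟨K, hKU, fun x hx y hy hxy => by
              rcases eq_or_lt_of_le hxy with he | hlt
              · rw [he]
              · by_cases hn : nidx p x = nidx p y
                · exact hS x hx y hy hlt hn
                · exact hD x hx y hy hlt hn⟩
          · exfalso
            apply hnb
            have hdec : ∀ u ∈ K, ∀ v ∈ K, u < v → nidx p u = nidx p v → g v < g u := by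
              intro u hu v hv huv hn
              have := hS u hu v hv huv hn
              omega
            refine ⟨K \ Mset p K, drop_mem hp0 hpm hsel hKU, ?_⟩
            show {x | b (K \ Mset p K) x ≤ h x} ∈ U
            refine Filter.mem_of_superset (drop_mem hp0 hpm hsel hKU) (fun x hx => ?_)
            show b (K \ Mset p K) x ≤ h x
            rw [hbb]
            have h1 : bf p K x ≤ g x + 1 := bf_le_of_dec hp0 hpm hdec hx.1
            have h2 : bf p (K \ Mset p K) x < bf p K x := bf_drop hp0 hpm hx
            have h3 : g x ≤ h x := hKsub hx.1
            omega
        · obtain ⟨x₀, hx₀⟩ := U.nonempty_of_mem hKU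
          have hH₂U : K ∩ Set.Ioi x₀ ∩ {x | nidx p x ≠ nidx p x₀} ∈ U :=
            inter_mem (inter_mem hKU (Ioi_mem hNP' x₀)) (neidx_mem hp0 hpm hNP' x₀)
          obtain ⟨v, hv⟩ := exists_eq_of_bounded g (g x₀)
            (K ∩ Set.Ioi x₀ ∩ {x | nidx p x ≠ nidx p x₀}) hH₂U (by
              rintro x ⟨⟨hxK, hxgt⟩, hxne⟩
              have := hD x₀ hx₀ x hxK hxgt (fun he => hxne he.symm)
              omega)
          exact ⟨{x | x ∈ K ∩ Set.Ioi x₀ ∩ {x | nidx p x ≠ nidx p x₀} ∧ g x = v}, hv,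
            fun x hx y hy _ => by rw [hx.2, hy.2]⟩
      · show {x | h x ≤ h x} ∈ U
        have : {x : ℕ | h x ≤ h x} = Set.univ := by ext z; simp
        rw [this]
        exact Filter.univ_mem
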